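/- Let V be a free ℤ-module of rank n with a fixed basis e₁,…,eₙ, and let q₀ be the Euclidean quadratic form making this basis orthonormal. For any rank-k submodule W of V, if w ∈ Λᵏ V is a primitive element representing W (i.e. generating the rank-1 saturation of Λᵏ W in Λᵏ V), then Δ(W, q₀) = ‖w‖², where ‖·‖ is the norm on Λᵏ V induced by declaring the wedge products of basis vectors orthonormal (Cauchy–Binet). -/

import Mathlib

open Matrix Finset Equiv

section CauchyBinet

variable {k n : ℕ}

/-- The image of `g` as a finset. -/
private def injImage (g : Fin k → Fin n) : Finset (Fin n) := Finset.image g Finset.univ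

private lemma injImage_card (g : Fin k → Fin n) (hg : Function.Injective g) :
    (injImage g).card = k := by
  rw [injImage, Finset.card_image_of_injective _ hg, Finset.card_univ, Fintype.card_fin]

/-- The strictly monotone enumeration of the image of an injective `g`. -/
private noncomputable def sortOf (g : Fin k → Fin n) (hg : Function.Injective g) :
    Fin k → Fin n := (injImage g).orderEmbOfFin (injImage_card g hg)

private lemma sortOf_strictMono (g : Fin k → Fin n) (hg : Function.Injective g) :
    StrictMono (sortOf g hg) := ((injImage g).orderEmbOfFin (injImage_card g hg)).strictMono

/-- The permutation such that `sortOf g hg ∘ permOf g hg = g`. -/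
private noncomputable def permOf (g : Fin k → Fin n) (hg : Function.Injective g) :
    Equiv.Perm (Fin k) :=
  (Equiv.ofBijective (fun i => (⟨g i, by simp [injImage]⟩ : injImage g))
    ((Fintype.bijective_iff_injective_and_card _).mpr
      ⟨fun a b hab => hg (congrArg Subtype.val hab),
        by rw [Fintype.card_coe, injImage_card g hg, Fintype.card_fin]⟩)).trans
    ((injImage g).orderIsoOfFin (injImage_card g hg)).toEquiv.symm

private lemma sortOf_permOf (g : Fin k → Fin n) (hg : Function.Injective g) (i : Fin k) :
    sortOf g hg (permOf g hg i) = g i := by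
  simp only [permOf, sortOf, Equiv.trans_apply, ← Finset.coe_orderIsoOfFin_apply]
  simp

private lemma sortOf_comp (f : Fin k → Fin n) (hf : StrictMono f) (σ : Equiv.Perm (Fin k))
    (hg : Function.Injective (f ∘ σ)) : sortOf (f ∘ σ) hg = f := by
  refine (Finset.orderEmbOfFin_unique (injImage_card _ hg) (fun x => ?_) hf).symm
  simp only [injImage, Finset.mem_image]
  exact ⟨σ.symm x, Finset.mem_univ _, by simp⟩

private lemma permOf_comp (f : Fin k → Fin n) (hf : StrictMono f) (σ : Equiv.Perm (Fin k))
    (hg : Function.Injective (f ∘ σ)) : permOf (f ∘ σ) hg = σ := by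
  refine Equiv.ext fun i => ?_
  have h1 := sortOf_permOf (f ∘ σ) hg i
  rw [sortOf_comp f hf σ hg] at h1
  exact hf.injective h1

theorem cauchyBinet {R : Type*} [CommRing R]
    (A B : Matrix (Fin k) (Fin n) R) :
    (A * Bᵀ).det = ∑ f ∈ Finset.univ.filter (fun f : Fin k → Fin n => StrictMono f),
      (A.submatrix id f).det * (B.submatrix id f).det := by
  classical
  have h1 : (A * Bᵀ).det
      = ∑ g : Fin k → Fin n, (∏ i, A i (g i)) * (Bᵀ.submatrix g id).det := by
    have hrow : (A * Bᵀ) = Matrix.of fun i => ∑ l, A i l • Bᵀ l := by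
      ext i j
      simp [Matrix.mul_apply]
    rw [hrow]
    have h := (Matrix.detRowAlternating :
        (Fin k → R) [⋀^Fin k]→ₗ[R] R).toMultilinearMap.map_sum
        (α := fun _ : Fin k => Fin n) (g := fun i l => A i l • Bᵀ l)
    simp only [MultilinearMap.map_smul_univ] at h
    exact h.trans (Finset.sum_congr rfl fun g _ => by rw [smul_eq_mul]; rfl)
  -- kill non-injective g
  rw [h1, ← Finset.sum_filter_add_sum_filter_not Finset.univ
      (fun g : Fin k → Fin n => Function.Injective g)]
  have h2 : ∑ g ∈ Finset.univ.filter (fun g : Fin k → Fin n => ¬ Function.Injective g),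
      (∏ i, A i (g i)) * (Bᵀ.submatrix g id).det = 0 := by
    refine Finset.sum_eq_zero fun g hg => ?_
    rw [Finset.mem_filter] at hg
    simp only [Function.Injective] at hg
    push_neg at hg
    obtain ⟨i, j, hij, hne⟩ := hg.2
    rw [Matrix.det_zero_of_row_eq hne (by ext l; simp [hij]), mul_zero]
  rw [h2, add_zero]
  -- rewrite RHS as a double sum over strictly monotone maps and permutations
  have h3 : ∀ f : Fin k → Fin n, (A.submatrix id f).det * (B.submatrix id f).det
      = ∑ σ : Equiv.Perm (Fin k),
          ((Equiv.Perm.sign σ : ℤ) : R) * (∏ i, A i (f (σ i)))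
            * (Bᵀ.submatrix f id).det := by
    intro f
    have hB : (B.submatrix id f).det = (Bᵀ.submatrix f id).det := by
      rw [← Matrix.det_transpose (B.submatrix id f), Matrix.transpose_submatrix]
    have hA : (A.submatrix id f).det
        = ∑ σ : Equiv.Perm (Fin k), ((Equiv.Perm.sign σ : ℤ) : R) * ∏ i, A i (f (σ i)) := by
      rw [← Matrix.det_transpose (A.submatrix id f), Matrix.det_apply']
      rfl
    rw [hA, hB, Finset.sum_mul]
  simp only [h3]
  rw [← Finset.sum_product']
  -- the bijection
  refine Finset.sum_bij' (i := fun g hg => (sortOf g (Finset.mem_filter.mp hg).2, permOf g (Finset.mem_filter.mp hg).2))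
    (j := fun p _ => p.1 ∘ p.2) ?_ ?_ ?_ ?_ ?_
  · intro g hg
    simp only [Finset.mem_product, Finset.mem_filter, Finset.mem_univ, true_and]
    exact ⟨sortOf_strictMono g (Finset.mem_filter.mp hg).2, trivial⟩
  · intro p hp
    simp only [Finset.mem_product, Finset.mem_filter, Finset.mem_univ, true_and] at hp
    simp only [Finset.mem_filter, Finset.mem_univ, true_and]
    exact hp.1.injective.comp p.2.injective
  · intro g hg
    funext i
    exact sortOf_permOf g (Finset.mem_filter.mp hg).2 i
  · intro p hp
    simp only [Finset.mem_product, Finset.mem_filter, Finset.mem_univ, true_and] at hp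
    have hinj : Function.Injective (p.1 ∘ p.2) := hp.1.injective.comp p.2.injective
    exact Prod.ext (sortOf_comp p.1 hp.1 p.2 hinj) (permOf_comp p.1 hp.1 p.2 hinj)
  · intro g hg
    have hginj : Function.Injective g := by simpa using hg
    set f := sortOf g hginj with hf
    set σ := permOf g hginj with hσ
    have hcomp : ∀ i, g i = f (σ i) := fun i => (sortOf_permOf g hginj i).symm
    have hsub : Bᵀ.submatrix g id = (Bᵀ.submatrix f id).submatrix σ id := by
      ext i j
      simp [hcomp i]
    rw [hsub, Matrix.det_permute]
    have : ∀ i, A i (g i) = A i (f (σ i)) := fun i => by rw [hcomp i]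
    rw [Finset.prod_congr rfl fun i _ => this i]
    push_cast
    ring
end CauchyBinet

/-- The discriminant (Gram determinant) of a quadratic form `q` with respect to
a family of vectors `b`. -/
noncomputable def gramDet {ι V : Type*} [Fintype ι] [DecidableEq ι] [AddCommGroup V]
    [Module ℝ V] (q : QuadraticForm ℝ V) (b : ι → V) : ℝ :=
  (Matrix.of fun i j => QuadraticMap.polar (⇑q) (b i) (b j) / 2).det

/-- Cauchy–Binet: for a rank-`k` submodule `W` of `ℤⁿ` with basis given by the rows of `M`,
represented by a primitive element `w` of `Λᵏ ℤⁿ` (whose coordinates in the standard basis of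
`Λᵏ ℤⁿ`, indexed by strictly monotone maps `Fin k → Fin n`, are the `k × k` minors of `M`),
the discriminant of the standard Euclidean form `q₀` on `W` equals `‖w‖²`, the sum of the
squares of these coordinates. -/
theorem discriminant_eq_norm_sq_of_primitive_wedge
    (n k : ℕ) (hk : k ≤ n)
    [DecidablePred fun f : Fin k → Fin n => StrictMono f]
    (q₀ : QuadraticForm ℝ (Fin n → ℝ)) (hq₀ : ∀ x, q₀ x = ∑ i, x i ^ 2)
    (W : Submodule ℤ (Fin n → ℤ)) (b : Module.Basis (Fin k) ℤ W)
    (M : Matrix (Fin k) (Fin n) ℤ) (hM : ∀ i j, M i j = (b i : Fin n → ℤ) j)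
    (hprim : (Finset.univ.filter fun f : Fin k → Fin n => StrictMono f).gcd
        (fun f => (M.submatrix id f).det) = 1) :
    gramDet q₀ (fun i => fun j => ((b i : Fin n → ℤ) j : ℝ)) =
      ∑ f ∈ Finset.univ.filter (fun f : Fin k → Fin n => StrictMono f),
        ((M.submatrix id f).det : ℝ) ^ 2 := by
  classical
  have hpolar : ∀ x y : Fin n → ℝ, QuadraticMap.polar (⇑q₀) x y / 2 = ∑ j, x j * y j := by
    intro x y
    simp only [QuadraticMap.polar, hq₀, Pi.add_apply]
    rw [← Finset.sum_sub_distrib, ← Finset.sum_sub_distrib,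
      Finset.sum_congr rfl (fun j _ => show (x j + y j) ^ 2 - x j ^ 2 - y j ^ 2
        = 2 * (x j * y j) by ring), ← Finset.mul_sum]
    ring
  set Aℝ : Matrix (Fin k) (Fin n) ℝ := M.map (Int.cast) with hAR
  have hmat : (Matrix.of fun i j => QuadraticMap.polar (⇑q₀)
      ((fun i => fun j => ((b i : Fin n → ℤ) j : ℝ)) i)
      ((fun i => fun j => ((b i : Fin n → ℤ) j : ℝ)) j) / 2) = Aℝ * Aℝᵀ := by
    ext i j
    rw [Matrix.mul_apply]
    simp [hpolar, hAR, hM]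
  rw [gramDet, hmat, cauchyBinet]
  refine Finset.sum_congr (by congr!) fun f _ => ?_
  have : (Aℝ.submatrix id f).det = ((M.submatrix id f).det : ℝ) := by
    rw [hAR, Matrix.submatrix_map]
    exact ((Int.castRingHom ℝ).map_det _).symm
  rw [this, sq]
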